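/- arXiv:2205.05418 — 2 statements merged into one kernel-verified Lean document; each statement's English description precedes it below -/
import Mathlib

section
/- Let p be an odd prime, α a positive integer, and a an integer. Then |S(p^α; a, 0)| ≤ p^{α/2} · gcd(p^α, a)^{1/2}. -/
open scoped Classical
open Complex

noncomputable section

/-- `e(t) = exp(2πit)`. -/
def eC (t : ℂ) : ℂ := Complex.exp (2 * Real.pi * Complex.I * t)

/-- Number of triples `1 ≤ x,y,z ≤ q` with `x²+y²+z²+k ≡ 0 (mod q)`. -/
def lamCount (q : ℕ) (k : ℤ) : ℕ :=
  ((Finset.Icc 1 q ×ˢ Finset.Icc 1 q ×ˢ Finset.Icc 1 q).filter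
    (fun t => (q : ℤ) ∣ ((t.1 : ℤ) ^ 2 + (t.2.1 : ℤ) ^ 2 + (t.2.2 : ℤ) ^ 2 + k))).card

/-- `λ(q; n, m, l, k)`. -/
def lamExp (q : ℕ) (n m l k : ℤ) : ℂ :=
  ∑ t ∈ (Finset.Icc 1 q ×ˢ Finset.Icc 1 q ×ˢ Finset.Icc 1 q).filter
      (fun t => (q : ℤ) ∣ ((t.1 : ℤ) ^ 2 + (t.2.1 : ℤ) ^ 2 + (t.2.2 : ℤ) ^ 2 + k)),
    eC (((n * t.1 + m * t.2.1 + l * t.2.2 : ℤ) : ℂ) / (q : ℂ))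

/-- An integer is `r`-free if it is nonzero and divisible by no `r`-th power of a prime. -/
def IsRFree (r : ℕ) (n : ℤ) : Prop := n ≠ 0 ∧ ∀ p : ℕ, p.Prime → ¬ ((p : ℤ) ^ r ∣ n)

/-- `R(H, r, k)`: number of triples `1 ≤ x,y,z ≤ H` with `x²+y²+z²+k` being `r`-free. -/
def Rcount (H r : ℕ) (k : ℤ) : ℕ :=
  ((Finset.Icc 1 H ×ˢ Finset.Icc 1 H ×ˢ Finset.Icc 1 H).filter
    (fun t => IsRFree r ((t.1 : ℤ) ^ 2 + (t.2.1 : ℤ) ^ 2 + (t.2.2 : ℤ) ^ 2 + k))).card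

/-- `S₃(H, k)`: number of triples `1 ≤ x,y,z ≤ H` with `x²+y²+z²+k` squarefree. -/
def S3count (H : ℕ) (k : ℤ) : ℕ :=
  ((Finset.Icc 1 H ×ˢ Finset.Icc 1 H ×ˢ Finset.Icc 1 H).filter
    (fun t => Squarefree ((t.1 : ℤ) ^ 2 + (t.2.1 : ℤ) ^ 2 + (t.2.2 : ℤ) ^ 2 + k))).card

/-- `D(H, q, k)`: number of triples `1 ≤ x,y,z ≤ H` with `x²+y²+z²+k ≡ 0 (mod q)`. -/
def Dcount (H q : ℕ) (k : ℤ) : ℕ :=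
  ((Finset.Icc 1 H ×ˢ Finset.Icc 1 H ×ˢ Finset.Icc 1 H).filter
    (fun t => (q : ℤ) ∣ ((t.1 : ℤ) ^ 2 + (t.2.1 : ℤ) ^ 2 + (t.2.2 : ℤ) ^ 2 + k))).card

/-- `N₁(H, q, k)`. -/
def N1 (H q : ℕ) (k : ℤ) : ℂ :=
  (q : ℂ)⁻¹ * ∑ t ∈ Finset.Icc 1 (q - 1),
    lamExp q (-(t : ℤ)) 0 0 k * ∑ h ∈ Finset.Icc 1 H, eC (((h * t : ℕ) : ℂ) / (q : ℂ))

/-- `N₂(H, q, k)`. -/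
def N2 (H q : ℕ) (k : ℤ) : ℂ :=
  ((q : ℂ) ^ 2)⁻¹ * ∑ t ∈ Finset.Icc 1 (q - 1) ×ˢ Finset.Icc 1 (q - 1),
    lamExp q (-(t.1 : ℤ)) (-(t.2 : ℤ)) 0 k *
      ((∑ h ∈ Finset.Icc 1 H, eC (((h * t.1 : ℕ) : ℂ) / (q : ℂ))) *
       (∑ h ∈ Finset.Icc 1 H, eC (((h * t.2 : ℕ) : ℂ) / (q : ℂ))))

/-- `N₃(H, q, k)`. -/
def N3 (H q : ℕ) (k : ℤ) : ℂ :=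
  ((q : ℂ) ^ 3)⁻¹ * ∑ t ∈ Finset.Icc 1 (q - 1) ×ˢ Finset.Icc 1 (q - 1) ×ˢ Finset.Icc 1 (q - 1),
    lamExp q (-(t.1 : ℤ)) (-(t.2.1 : ℤ)) (-(t.2.2 : ℤ)) k *
      ((∑ h ∈ Finset.Icc 1 H, eC (((h * t.1 : ℕ) : ℂ) / (q : ℂ))) *
       (∑ h ∈ Finset.Icc 1 H, eC (((h * t.2.1 : ℕ) : ℂ) / (q : ℂ))) *
       (∑ h ∈ Finset.Icc 1 H, eC (((h * t.2.2 : ℕ) : ℂ) / (q : ℂ))))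

/-- The Gauss sum `G(q; n)`. -/
def gaussQ (q : ℕ) (n : ℤ) : ℂ :=
  ∑ x ∈ Finset.Icc 1 q, eC (((n * (x : ℤ) ^ 2 : ℤ) : ℂ) / (q : ℂ))

/-- Multiplicative inverse of `x` modulo `c`, as a natural number. -/
def invMod (c x : ℕ) : ℕ := ((x : ZMod c)⁻¹).val

/-- The Salié sum `S(c; a, b)`. -/
def salieSum (c : ℕ) (a b : ℤ) : ℂ :=
  ∑ x ∈ (Finset.Icc 1 c).filter (fun x => Nat.Coprime x c),
    (jacobiSym (x : ℤ) c : ℂ) *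
      eC (((a * x + b * (invMod c x) : ℤ) : ℂ) / (c : ℂ))

/-- `T(c; a, ρ)`. -/
def Tchar (c : ℕ) (a : ℤ) (ρ : ℕ) : ℂ :=
  ∑ x ∈ (Finset.Icc 1 c).filter (fun x => Nat.Coprime x c),
    (jacobiSym (x : ℤ) c : ℂ) ^ ρ * eC (((a * x : ℤ) : ℂ) / (c : ℂ))

lemma eC_ne_zero (t : ℂ) : eC t ≠ 0 := Complex.exp_ne_zero _

lemma eC_int_mul (n : ℤ) (t : ℂ) : eC ((n : ℂ) * t) = eC t ^ n := by
  rw [eC, eC, ← Complex.exp_int_mul]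
  ring_nf

lemma eC_nat_mul (n : ℕ) (t : ℂ) : eC ((n : ℂ) * t) = eC t ^ n := by
  have := eC_int_mul (n : ℤ) t
  push_cast at this
  rw [this, zpow_natCast]

lemma eC_pow_self (q : ℕ) (hq : q ≠ 0) : eC ((q : ℂ)⁻¹) ^ q = 1 := by
  rw [← eC_nat_mul, mul_inv_cancel₀ (by exact_mod_cast hq), eC,
    mul_one, Complex.exp_two_pi_mul_I]

lemma zpow_congr_mod {ζ : ℂ} {n : ℕ} (hζ0 : ζ ≠ 0) (hζ : ζ ^ n = 1) {j k : ℤ}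
    (h : j ≡ k [ZMOD n]) : ζ ^ j = ζ ^ k := by
  obtain ⟨t, ht⟩ := h.dvd
  have hk : k = j + (n : ℤ) * t := by linarith
  rw [hk, zpow_add₀ hζ0, zpow_mul, zpow_natCast, hζ, one_zpow, mul_one]

lemma geom_zero {z : ℂ} {m : ℕ} (hz : z ^ m = 1) (hz1 : z ≠ 1) :
    ∑ i ∈ Finset.range m, z ^ i = 0 := by
  rw [geom_sum_eq hz1, hz, sub_self, zero_div]

lemma eC_div (n : ℤ) (q : ℕ) (hq : q ≠ 0) :
    eC ((n : ℂ) / (q : ℂ)) = eC ((q : ℂ)⁻¹) ^ n := by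
  rw [div_eq_mul_inv, eC_int_mul]

lemma salieSum_eq_range (q : ℕ) (hq : 1 < q) (a : ℤ) :
    salieSum q a 0 =
      ∑ x ∈ Finset.range q, (jacobiSym (x : ℤ) q : ℂ) * eC ((q : ℂ)⁻¹) ^ (a * x) := by
  have hq0 : q ≠ 0 := by omega
  haveI : NeZero q := ⟨hq0⟩
  rw [salieSum]
  have h1 : ∀ x : ℕ, (jacobiSym (x : ℤ) q : ℂ) *
      eC (((a * x + 0 * (invMod q x) : ℤ) : ℂ) / (q : ℂ))
      = (jacobiSym (x : ℤ) q : ℂ) * eC ((q : ℂ)⁻¹) ^ (a * x) := by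
    intro x
    rw [zero_mul, add_zero, eC_div _ _ hq0]
  simp only [h1]
  rw [Finset.sum_filter_of_ne]
  · -- now : ∑ over Icc 1 q = ∑ over range q
    have e1 : ∑ x ∈ Finset.Icc 1 (q-1),
        (jacobiSym (x : ℤ) q : ℂ) * eC ((q : ℂ)⁻¹) ^ (a * x)
        = ∑ x ∈ Finset.Icc 1 q,
        (jacobiSym (x : ℤ) q : ℂ) * eC ((q : ℂ)⁻¹) ^ (a * x) := by
      apply Finset.sum_subset
      · apply Finset.Icc_subset_Icc_right; omega
      · intro x hx hx'
        have hxq : x = q := by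
          simp only [Finset.mem_Icc] at hx hx'; omega
        have : jacobiSym (x : ℤ) q = 0 := by
          rw [jacobiSym.eq_zero_iff_not_coprime, hxq]
          simp [Int.gcd_natCast_natCast, Nat.gcd_self]; omega
        simp [this]
    have e2 : ∑ x ∈ Finset.Icc 1 (q-1),
        (jacobiSym (x : ℤ) q : ℂ) * eC ((q : ℂ)⁻¹) ^ (a * x)
        = ∑ x ∈ Finset.range q,
        (jacobiSym (x : ℤ) q : ℂ) * eC ((q : ℂ)⁻¹) ^ (a * x) := by
      apply Finset.sum_subset
      · intro x hx; simp only [Finset.mem_Icc] at hx; simp only [Finset.mem_range]; omega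
      · intro x hx hx'
        have hx0 : x = 0 := by
          simp only [Finset.mem_range] at hx; simp only [Finset.mem_Icc] at hx'; omega
        have : jacobiSym (x : ℤ) q = 0 := by
          rw [hx0]; exact_mod_cast jacobiSym.zero_left hq
        simp [this]
    rw [← e1, e2]
  · intro x _ hx
    by_contra hcop
    apply hx
    have : jacobiSym (x : ℤ) q = 0 := by
      rw [jacobiSym.eq_zero_iff_not_coprime]
      simpa [Int.gcd_natCast_natCast] using hcop
    simp [this]

lemma sum_range_mul_split {M : Type*} [AddCommMonoid M] (p m : ℕ) (f : ℕ → M) :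
    ∑ x ∈ Finset.range (p * m), f x
      = ∑ uv ∈ Finset.range p ×ˢ Finset.range m, f (uv.1 + p * uv.2) := by
  rcases Nat.eq_zero_or_pos p with hp | hp
  · subst hp; simp
  apply Finset.sum_nbij' (i := fun x => (x % p, x / p)) (j := fun uv => uv.1 + p * uv.2)
  · intro x hx
    simp only [Finset.mem_range] at hx
    simp only [Finset.mem_product, Finset.mem_range]
    constructor
    · exact Nat.mod_lt _ hp
    · exact Nat.div_lt_of_lt_mul (by omega)
  · intro uv huv
    simp only [Finset.mem_product, Finset.mem_range] at huv
    simp only [Finset.mem_range]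
    calc uv.1 + p * uv.2 < p + p * uv.2 := by omega
    _ = p * (uv.2 + 1) := by ring
    _ ≤ p * m := Nat.mul_le_mul_left _ (by omega)
  · intro x _; exact Nat.mod_add_div x p
  · intro uv huv
    simp only [Finset.mem_product, Finset.mem_range] at huv
    ext
    · simp [Nat.add_mul_mod_self_left, Nat.mod_eq_of_lt huv.1]
    · simp [Nat.add_mul_div_left _ _ hp, Nat.div_eq_of_lt huv.1]
  · intro x _
    rw [Nat.mod_add_div x p]

lemma salie_prod (p : ℕ) (hp : 1 < p) (α : ℕ) (hα : 0 < α) (a : ℤ) :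
    salieSum (p^α) a 0 =
      (∑ u ∈ Finset.range p, (jacobiSym (u : ℤ) p : ℂ)^α *
          eC (((p^α : ℕ) : ℂ)⁻¹) ^ (a * u)) *
      (∑ v ∈ Finset.range (p^(α-1)), (eC (((p^α : ℕ) : ℂ)⁻¹) ^ (p : ℤ)) ^ (a * v)) := by
  have hq1 : 1 < p ^ α := Nat.one_lt_pow (by omega) hp
  have hζ0 : eC (((p^α : ℕ) : ℂ)⁻¹) ≠ 0 := eC_ne_zero _
  rw [salieSum_eq_range _ hq1 a]
  rw [show p ^ α = p * p ^ (α - 1) by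
    rw [← pow_succ']; congr 1; omega]
  rw [sum_range_mul_split, Finset.sum_product, Finset.sum_mul_sum]
  apply Finset.sum_congr rfl
  intro u hu
  apply Finset.sum_congr rfl
  intro v hv
  have hqeq : p * p ^ (α - 1) = p ^ α := by rw [← pow_succ']; congr 1; omega
  have hJ : (jacobiSym ((u + p * v : ℕ) : ℤ) (p * p ^ (α - 1)) : ℂ)
      = (jacobiSym (u : ℤ) p : ℂ)^α := by
    rw [hqeq, jacobiSym.pow_right]
    have : jacobiSym ((u + p * v : ℕ) : ℤ) p = jacobiSym (u : ℤ) p := by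
      apply jacobiSym.mod_left'
      push_cast
      simp [Int.add_mul_emod_self_left]
    rw [this]; push_cast; ring
  have hζ : eC (((p * p ^ (α-1) : ℕ) : ℂ)⁻¹) ^ (a * ((u + p * v : ℕ) : ℤ))
      = eC (((p^α : ℕ) : ℂ)⁻¹) ^ (a * u) *
        (eC (((p^α : ℕ) : ℂ)⁻¹) ^ (p : ℤ)) ^ (a * v) := by
    rw [hqeq]
    rw [← zpow_mul, ← zpow_add₀ hζ0]
    congr 1
    push_cast
    ring
  rw [hJ, hζ, hqeq, mul_assoc]

lemma eC_inv_primitive (n : ℕ) (hn : n ≠ 0) : IsPrimitiveRoot (eC ((n : ℂ)⁻¹)) n := by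
  have := Complex.isPrimitiveRoot_exp n hn
  rwa [div_eq_mul_inv] at this

lemma abs_quad_gauss (p : ℕ) (hp : p.Prime) (hp2 : p ≠ 2) (a₀ : ℤ) (ha₀ : ¬ (p : ℤ) ∣ a₀) :
    ‖∑ u ∈ Finset.range p,
      (jacobiSym (u : ℤ) p : ℂ) * eC ((p : ℂ)⁻¹) ^ (a₀ * u)‖ ^ 2 ≤ p := by
  haveI : Fact p.Prime := ⟨hp⟩
  have hξprim : IsPrimitiveRoot (eC ((p : ℂ)⁻¹)) p := eC_inv_primitive p hp.ne_zero
  set ξ : ℂ := eC ((p : ℂ)⁻¹) with hξdef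
  have hξp : ξ ^ p = 1 := hξprim.pow_eq_one
  set ψ₀ : AddChar (ZMod p) ℂ := AddChar.zmodChar p hξp with hψ₀def
  have hψ₀ : ψ₀.IsPrimitive := by
    have := AddChar.zmodChar_primitive_of_primitive_root p hξprim
    exact this
  set b : ZMod p := (a₀ : ZMod p) with hbdef
  have hb : b ≠ 0 := by
    rw [hbdef, Ne, ZMod.intCast_zmod_eq_zero_iff_dvd]
    exact ha₀
  set ψ : AddChar (ZMod p) ℂ := AddChar.mulShift ψ₀ b with hψdef
  have hψ : ψ.IsPrimitive := AddChar.IsPrimitive.of_ne_one (hψ₀ hb)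
  set χ : MulChar (ZMod p) ℂ :=
    (quadraticChar (ZMod p)).ringHomComp (Int.castRingHom ℂ) with hχdef
  have hχ1 : χ ≠ 1 := by
    rw [hχdef, Ne, MulChar.ringHomComp_eq_one_iff Int.cast_injective]
    apply quadraticChar_ne_one
    rw [ZMod.ringChar_zmod_n]
    exact hp2
  have hχ2 : χ.IsQuadratic := (quadraticChar_isQuadratic (ZMod p)).comp _
  have hsum : ∑ u ∈ Finset.range p, (jacobiSym (u : ℤ) p : ℂ) * ξ ^ (a₀ * u)
      = gaussSum χ ψ := by
    rw [gaussSum]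
    refine Finset.sum_nbij' (fun u => (u : ZMod p)) (fun x => x.val) ?_ ?_ ?_ ?_ ?_
    · intro u _; exact Finset.mem_univ _
    · intro x _; simp only [Finset.mem_range]; exact ZMod.val_lt x
    · intro u hu
      simp only [Finset.mem_range] at hu
      exact ZMod.val_cast_of_lt hu
    · intro x _; exact ZMod.natCast_rightInverse x
    · intro u hu
      simp only [Finset.mem_range] at hu
      congr 1
      · -- jacobi = χ
        rw [hχdef, MulChar.ringHomComp_apply]
        have h1 : legendreSym p (u : ℤ) = quadraticChar (ZMod p) ((u : ℕ) : ZMod p) := by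
          rw [legendreSym]; push_cast; rfl
        rw [← jacobiSym.legendreSym.to_jacobiSym, h1]
        simp
      · -- zeta power = ψ
        rw [hψdef, AddChar.mulShift_apply, hψ₀def, AddChar.zmodChar_apply]
        have hcong : a₀ * u ≡ ((b * (u : ZMod p)).val : ℤ) [ZMOD p] := by
          rw [← ZMod.intCast_eq_intCast_iff]
          push_cast
          rw [ZMod.natCast_val, ZMod.cast_id]
        rw [zpow_congr_mod (eC_ne_zero _) hξp hcong, zpow_natCast]
  rw [hsum]
  have hG2 : gaussSum χ ψ ^ 2 = χ (-1) * Fintype.card (ZMod p) := gaussSum_sq hχ1 hχ2 hψ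
  have habs : ‖gaussSum χ ψ‖ ^ 2 = ‖χ (-1)‖ * p := by
    rw [← norm_pow, hG2, norm_mul, ZMod.card]
    simp
  rw [habs]
  have : ‖χ (-1)‖ ≤ 1 := by
    rcases hχ2 (-1) with h | h | h <;> rw [h] <;> simp
  nlinarith [ (Nat.cast_nonneg p : (0:ℝ) ≤ p) ]

lemma abs_eC_nat_inv (n : ℕ) : ‖eC ((n : ℂ)⁻¹)‖ = 1 := by
  rw [eC, show (2 * (Real.pi : ℂ) * Complex.I * ((n : ℂ))⁻¹)
      = (((2 * Real.pi * (n : ℝ)⁻¹ : ℝ)) : ℂ) * Complex.I by push_cast; ring,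
    Complex.norm_exp_ofReal_mul_I]

lemma final_convert (p α : ℕ) (X S : ℝ) (hp : (0:ℝ) ≤ p) (hX : 0 ≤ X) (hS : 0 ≤ S)
    (h : S ^ 2 ≤ (p : ℝ) ^ α * X) : S ≤ (p : ℝ) ^ ((α : ℝ) / 2) * X ^ ((1 : ℝ) / 2) := by
  have h1 : S = Real.sqrt (S ^ 2) := by rw [Real.sqrt_sq hS]
  rw [h1]
  calc Real.sqrt (S ^ 2) ≤ Real.sqrt ((p : ℝ) ^ α * X) := Real.sqrt_le_sqrt h
  _ = Real.sqrt ((p : ℝ) ^ α) * Real.sqrt X := Real.sqrt_mul (by positivity) _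
  _ = (p : ℝ) ^ ((α : ℝ) / 2) * X ^ ((1 : ℝ) / 2) := by
      rw [Real.sqrt_eq_rpow, Real.sqrt_eq_rpow, ← Real.rpow_natCast (p : ℝ) α,
        ← Real.rpow_mul hp]
      ring_nf

/-- Lemma 2.4: `|S(p^α; a, 0)| ≤ p^{α/2} (p^α, a)^{1/2}`. -/
theorem salieSum_zero_bound (p : ℕ) (hp : p.Prime) (hodd : Odd p) (α : ℕ) (hα : 0 < α)
    (a : ℤ) :
    ‖salieSum (p ^ α) a 0‖ ≤
      (p : ℝ) ^ ((α : ℝ) / 2) * (Int.gcd ((p : ℤ) ^ α) a : ℝ) ^ ((1 : ℝ) / 2) := by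
  have hp1 : 1 < p := hp.one_lt
  have hp2 : p ≠ 2 := by
    rintro rfl
    exact (Nat.not_odd_iff_even.mpr even_two) hodd
  have hq0 : p ^ α ≠ 0 := pow_ne_zero _ hp.pos.ne'
  have hm0 : p ^ (α - 1) ≠ 0 := pow_ne_zero _ hp.pos.ne'
  have hqm : p ^ α = p * p ^ (α - 1) := by rw [← pow_succ']; congr 1; omega
  have hqmZ : ((p : ℤ)) ^ α = (p : ℤ) * ((p : ℤ)) ^ (α - 1) := by exact_mod_cast hqm
  have hqmR : ((p : ℝ)) ^ α = (p : ℝ) * ((p : ℝ)) ^ (α - 1) := by exact_mod_cast hqm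
  have hζ0 : eC (((p ^ α : ℕ) : ℂ)⁻¹) ≠ 0 := eC_ne_zero _
  have hωeq : eC (((p ^ α : ℕ) : ℂ)⁻¹) ^ (p : ℤ) = eC (((p ^ (α-1) : ℕ) : ℂ)⁻¹) := by
    rw [zpow_natCast, ← eC_nat_mul]
    congr 1
    rw [hqm]
    push_cast
    rw [mul_inv]
    rw [← mul_assoc, mul_inv_cancel₀ (by exact_mod_cast hp.pos.ne'), one_mul]
  have hξeq : eC (((p ^ α : ℕ) : ℂ)⁻¹) ^ ((p ^ (α-1) : ℕ) : ℤ) = eC ((p : ℂ)⁻¹) := by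
    rw [zpow_natCast, ← eC_nat_mul]
    congr 1
    rw [hqm]
    push_cast
    rw [mul_inv, mul_comm ((p:ℂ))⁻¹, ← mul_assoc,
      mul_inv_cancel₀ (by exact_mod_cast hm0), one_mul]
  have hωprim : IsPrimitiveRoot (eC (((p ^ (α-1) : ℕ) : ℂ)⁻¹)) (p ^ (α-1)) :=
    eC_inv_primitive _ hm0
  have hξprim : IsPrimitiveRoot (eC ((p : ℂ)⁻¹)) p := eC_inv_primitive _ hp.pos.ne'
  rw [salie_prod p hp1 α hα a]
  -- rewrite E
  have hE : ∀ v : ℕ, (eC (((p ^ α : ℕ) : ℂ)⁻¹) ^ (p : ℤ)) ^ (a * v)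
      = (eC (((p ^ (α-1) : ℕ) : ℂ)⁻¹) ^ a) ^ (v : ℕ) := by
    intro v
    rw [hωeq, zpow_mul, zpow_natCast]
  simp only [hE]
  by_cases hma : ((p ^ (α - 1) : ℕ) : ℤ) ∣ a
  · obtain ⟨a₀, rfl⟩ := hma
    -- E = m
    have hωa : eC (((p ^ (α-1) : ℕ) : ℂ)⁻¹) ^ ((p ^ (α - 1) : ℕ) : ℤ) = 1 := by
      rw [zpow_natCast]; exact hωprim.pow_eq_one
    have hEval : ∑ v ∈ Finset.range (p ^ (α-1)),
        (eC (((p ^ (α-1) : ℕ) : ℂ)⁻¹) ^ (((p ^ (α - 1) : ℕ) : ℤ) * a₀)) ^ (v : ℕ)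
        = ((p ^ (α-1) : ℕ) : ℂ) := by
      have h1 : eC (((p ^ (α-1) : ℕ) : ℂ)⁻¹) ^ (((p ^ (α - 1) : ℕ) : ℤ) * a₀) = 1 := by
        rw [zpow_mul, hωa, one_zpow]
      simp only [h1, one_pow, Finset.sum_const, Finset.card_range, nsmul_eq_mul, mul_one]
    rw [hEval]
    -- rewrite G
    have hGterm : ∀ u : ℕ, eC (((p ^ α : ℕ) : ℂ)⁻¹) ^ ((((p ^ (α - 1) : ℕ) : ℤ) * a₀) * u)
        = eC ((p : ℂ)⁻¹) ^ (a₀ * u) := by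
      intro u
      rw [show (((p ^ (α - 1) : ℕ) : ℤ) * a₀) * u = ((p ^ (α-1) : ℕ) : ℤ) * (a₀ * u) by ring,
        zpow_mul, hξeq]
    simp only [hGterm]
    set G : ℂ := ∑ u ∈ Finset.range p, (jacobiSym (u : ℤ) p : ℂ) ^ α *
      eC ((p : ℂ)⁻¹) ^ (a₀ * u) with hGdef
    rw [norm_mul, Complex.norm_natCast]
    by_cases hpa : (p : ℤ) ∣ a₀
    · -- gcd = p^α, |G| ≤ p
      obtain ⟨t, rfl⟩ := hpa
      have hgcd : Int.gcd ((p : ℤ) ^ α) (((p ^ (α - 1) : ℕ) : ℤ) * ((p : ℤ) * t))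
          = p ^ α := by
        rw [Int.gcd_eq_natAbs_left]
        · simp [Int.natAbs_pow]
        · refine ⟨t, ?_⟩
          push_cast
          rw [hqmZ]
          ring
      rw [hgcd]
      have hGle : ‖G‖ ≤ p := by
        rw [hGdef]
        calc ‖∑ u ∈ Finset.range p, (jacobiSym (u : ℤ) p : ℂ) ^ α *
              eC ((p : ℂ)⁻¹) ^ (((p:ℤ) * t) * u)‖
            ≤ ∑ u ∈ Finset.range p, ‖(jacobiSym (u : ℤ) p : ℂ) ^ α *
              eC ((p : ℂ)⁻¹) ^ (((p:ℤ) * t) * u)‖ := norm_sum_le _ _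
        _ ≤ ∑ _u ∈ Finset.range p, 1 := by
            apply Finset.sum_le_sum
            intro u _
            rw [norm_mul, norm_pow, norm_zpow, abs_eC_nat_inv, one_zpow, mul_one]
            have h1 : ‖(jacobiSym (u : ℤ) p : ℂ)‖ ≤ 1 := by
              rcases jacobiSym.trichotomy (u : ℤ) p with h | h | h <;> rw [h] <;> simp
            exact pow_le_one₀ (by positivity) h1
        _ = p := by simp
      apply final_convert p α _ _ (by positivity) (by positivity) (by positivity)
      push_cast
      have hm' : (0:ℝ) ≤ (p:ℝ) ^ (α - 1) := by positivity
      have habs : (0:ℝ) ≤ ‖G‖ := by positivity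
      calc (‖G‖ * (p:ℝ) ^ (α-1)) ^ 2
          ≤ ((p:ℝ) * (p:ℝ) ^ (α-1)) ^ 2 := by gcongr
      _ = (p:ℝ)^α * (p:ℝ)^α := by rw [← hqmR]; ring
    · -- |G|^2 ≤ p
      have hGsq : ‖G‖ ^ 2 ≤ p := by
        rcases Nat.even_or_odd α with hev | hod
        · -- α even : G = -1
          have hz1 : eC ((p:ℂ)⁻¹) ^ a₀ ≠ 1 := fun h => hpa ((hξprim.zpow_eq_one_iff_dvd a₀).mp h)
          have hzp : (eC ((p:ℂ)⁻¹) ^ a₀) ^ p = 1 := by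
            rw [← zpow_natCast _ p, ← zpow_mul, mul_comm, zpow_mul, zpow_natCast,
              hξprim.pow_eq_one, one_zpow]
          have hGeq : G = -1 := by
            rw [hGdef]
            have hterm : ∀ u ∈ Finset.range p,
                (jacobiSym (u : ℤ) p : ℂ) ^ α * eC ((p : ℂ)⁻¹) ^ (a₀ * u)
                = (eC ((p:ℂ)⁻¹) ^ a₀) ^ u - (if u = 0 then (eC ((p:ℂ)⁻¹) ^ a₀) ^ u else 0) := by
              intro u hu
              simp only [Finset.mem_range] at hu
              have hzu : eC ((p : ℂ)⁻¹) ^ (a₀ * u) = (eC ((p:ℂ)⁻¹) ^ a₀) ^ u := by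
                rw [zpow_mul, zpow_natCast]
              rcases Nat.eq_zero_or_pos u with h0 | h0
              · subst h0
                have hj0 : (jacobiSym ((0:ℕ) : ℤ) p : ℂ) = 0 := by
                  exact_mod_cast congrArg (fun n : ℤ => (n : ℂ)) (jacobiSym.zero_left hp1)
                rw [hj0, zero_pow hα.ne', zero_mul]
                simp
              · have hcop : Int.gcd (u : ℤ) p = 1 := by
                  rw [Int.gcd_natCast_natCast]
                  exact Nat.Coprime.symm
                    (hp.coprime_iff_not_dvd.mpr (Nat.not_dvd_of_pos_of_lt h0 hu))
                rw [if_neg (by omega : ¬ u = 0), sub_zero, hzu]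
                rcases jacobiSym.eq_one_or_neg_one hcop with h | h <;> rw [h]
                · push_cast; rw [one_pow, one_mul]
                · push_cast; rw [hev.neg_one_pow, one_mul]
            rw [Finset.sum_congr rfl hterm, Finset.sum_sub_distrib, geom_zero hzp hz1]
            rw [Finset.sum_ite_eq' (Finset.range p) 0]
            simp [Finset.mem_range, hp.pos]
          rw [hGeq]
          simp only [norm_neg, norm_one, one_pow]
          exact_mod_cast hp1.le
        · -- α odd : Gauss sum
          have hJ : ∀ u : ℕ, (jacobiSym (u : ℤ) p : ℂ) ^ α = (jacobiSym (u : ℤ) p : ℂ) := by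
            intro u
            rcases jacobiSym.trichotomy (u : ℤ) p with h | h | h <;> rw [h]
            · push_cast; rw [zero_pow hα.ne']
            · push_cast; rw [one_pow]
            · push_cast; rw [hod.neg_one_pow]
          rw [hGdef]
          simp only [hJ]
          exact abs_quad_gauss p hp hp2 a₀ hpa
      -- m ≤ gcd
      have hmgcd : (p ^ (α-1) : ℕ) ≤ Int.gcd ((p : ℤ) ^ α) (((p ^ (α - 1) : ℕ) : ℤ) * a₀) := by
        apply Nat.le_of_dvd
        · apply Int.gcd_pos_of_ne_zero_left
          positivity
        · have h1 : ((p ^ (α-1) : ℕ) : ℤ) ∣ (p : ℤ) ^ α := by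
            push_cast
            exact pow_dvd_pow _ (by omega)
          have h2 : ((p ^ (α-1) : ℕ) : ℤ) ∣ ((p ^ (α - 1) : ℕ) : ℤ) * a₀ := ⟨a₀, rfl⟩
          exact Int.natCast_dvd_natCast.mp (by exact_mod_cast Int.dvd_gcd h1 h2)
      apply final_convert p α _ _ (by positivity) (by positivity) (by positivity)
      have habs : (0:ℝ) ≤ ‖G‖ := by positivity
      have hple : (0:ℝ) ≤ p := by positivity
      have hcast : ((p : ℝ)) ^ (α-1) ≤ (Int.gcd ((p : ℤ) ^ α) ((p : ℤ) ^ (α - 1) * a₀) : ℝ) := by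
        have h' : ((p ^ (α-1) : ℕ) : ℝ) ≤ (Int.gcd ((p : ℤ) ^ α) (((p ^ (α - 1) : ℕ) : ℤ) * a₀) : ℝ) := by
          exact_mod_cast hmgcd
        push_cast at h'
        exact h'
      push_cast
      push_cast at hcast
      calc (‖G‖ * (p:ℝ) ^ (α-1)) ^ 2
          = ‖G‖ ^ 2 * ((p:ℝ) ^ (α-1))^2 := by ring
      _ ≤ (p:ℝ) * ((p:ℝ) ^ (α-1))^2 := by nlinarith [sq_nonneg ((p:ℝ)^(α-1))]
      _ = (p:ℝ)^α * (p:ℝ)^(α-1) := by rw [hqmR]; ring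
      _ ≤ (p:ℝ)^α * (Int.gcd ((p : ℤ) ^ α) ((p : ℤ) ^ (α - 1) * a₀) : ℝ) := by
          apply mul_le_mul_of_nonneg_left _ (by positivity)
          exact hcast
  · -- E = 0
    have hωa : eC (((p ^ (α-1) : ℕ) : ℂ)⁻¹) ^ a ≠ 1 := by
      intro h
      exact hma ((hωprim.zpow_eq_one_iff_dvd a).mp h)
    have hEval : ∑ v ∈ Finset.range (p ^ (α-1)),
        (eC (((p ^ (α-1) : ℕ) : ℂ)⁻¹) ^ a) ^ (v : ℕ) = 0 := by
      apply geom_zero _ hωa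
      rw [← zpow_natCast _ (p ^ (α-1)), ← zpow_mul, mul_comm, zpow_mul, zpow_natCast,
        hωprim.pow_eq_one, one_zpow]
    rw [hEval, mul_zero, norm_zero]
    positivity


end
end

section
/- Let k be a fixed integer. For every ε > 0 there is a constant C > 0 (depending on k, ε) such that for all integers H ≥ 2 and all positive integers q with q ≤ 3H² + |k|: D(H, q, k) ≤ C · q^{−1} · H^{3+ε}. -/
open scoped Classical
open Complex

noncomputable section

section AuxDB

open Finset


lemma two_pow_aux (e : ℕ) : ((e:ℝ) + 1) ≤ 2 ^ e := by
  have := Nat.lt_two_pow_self (n := e)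
  have : (e + 1 : ℕ) ≤ 2 ^ e := this
  exact_mod_cast this

lemma divisor_bound : ∀ ε : ℝ, 0 < ε → ∃ C : ℝ, 1 ≤ C ∧ ∀ n : ℕ, n ≠ 0 →
    (n.divisors.card : ℝ) ≤ C * (n : ℝ) ^ ε := by
  intro ε hε
  set m : ℝ := min (ε * Real.log 2) 1 with hm
  have hlog2 : (0:ℝ) < Real.log 2 := Real.log_pos (by norm_num)
  have hm0 : 0 < m := lt_min (by positivity) one_pos
  have hm1 : m ≤ 1 := min_le_right _ _
  have hminv : 1 ≤ 1 / m := by rw [le_div_iff₀ hm0]; linarith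
  set B : ℕ := ⌈(2:ℝ) ^ (1/ε)⌉₊ with hB
  refine ⟨(1/m) ^ B, one_le_pow₀ hminv, ?_⟩
  intro n hn
  -- key per-prime bound
  have key : ∀ p ∈ n.primeFactors,
      ((n.factorization p : ℝ) + 1) ≤ (if p ≤ B then 1/m else 1) * ((p:ℝ) ^ (n.factorization p)) ^ ε := by
    intro p hp
    have hpp : p.Prime := Nat.prime_of_mem_primeFactors hp
    have hp2 : (2:ℝ) ≤ p := by exact_mod_cast hpp.two_le
    set e : ℕ := n.factorization p
    have hrw : ((p:ℝ) ^ e) ^ ε = ((p:ℝ) ^ ε) ^ e := by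
      rw [← Real.rpow_natCast (p:ℝ) e, ← Real.rpow_mul (by positivity), mul_comm,
        Real.rpow_mul (by positivity), Real.rpow_natCast]
    by_cases hple : p ≤ B
    · simp only [hple, if_true]
      rw [hrw]
      have h2e : ((e:ℝ) + 1) * m ≤ ((2:ℝ) ^ ε) ^ e := by
        have h1 : ((e:ℝ) + 1) * m ≤ e * (ε * Real.log 2) + 1 := by
          have h2 : m ≤ ε * Real.log 2 := min_le_left _ _
          nlinarith [hm1, hm0.le, (Nat.cast_nonneg e : (0:ℝ) ≤ (e:ℝ))]
        have h2 : (e:ℝ) * (ε * Real.log 2) + 1 ≤ Real.exp (e * (ε * Real.log 2)) :=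
          Real.add_one_le_exp _
        have h3 : ((2:ℝ) ^ ε) ^ e = Real.exp ((e:ℝ) * (ε * Real.log 2)) := by
          rw [Real.rpow_def_of_pos (by norm_num : (0:ℝ) < 2), ← Real.exp_nat_mul]
          congr 1
          ring
        rw [h3]
        linarith
      have hmono : ((2:ℝ) ^ ε) ^ e ≤ ((p:ℝ) ^ ε) ^ e := by
        apply pow_le_pow_left₀ (by positivity)
        exact Real.rpow_le_rpow (by norm_num) hp2 hε.le
      calc ((e:ℝ) + 1) = (((e:ℝ)+1) * m) * (1/m) := by field_simp
        _ ≤ (((2:ℝ) ^ ε) ^ e) * (1/m) := by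
            apply mul_le_mul_of_nonneg_right h2e (by positivity)
        _ ≤ (((p:ℝ) ^ ε) ^ e) * (1/m) := by
            apply mul_le_mul_of_nonneg_right hmono (by positivity)
        _ = 1/m * ((p:ℝ) ^ ε) ^ e := by ring
    · simp only [hple, if_false, one_mul]
      rw [hrw]
      have hpB : (2:ℝ) ^ (1/ε) ≤ p := by
        have : (B:ℝ) ≤ p := by exact_mod_cast (Nat.lt_of_not_le hple).le
        exact le_trans (Nat.le_ceil _) this
      have h2 : (2:ℝ) ≤ (p:ℝ) ^ ε := by
        have := Real.rpow_le_rpow (by positivity) hpB hε.le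
        rwa [← Real.rpow_mul (by norm_num : (0:ℝ) ≤ 2), one_div,
          inv_mul_cancel₀ hε.ne', Real.rpow_one] at this
      calc ((e:ℝ) + 1) ≤ 2 ^ e := two_pow_aux e
        _ ≤ ((p:ℝ) ^ ε) ^ e := pow_le_pow_left₀ (by norm_num) h2 e
  have hd : (n.divisors.card : ℝ) = ∏ p ∈ n.primeFactors, ((n.factorization p : ℝ) + 1) := by
    rw [Nat.card_divisors hn]
    push_cast
    rfl
  have hn' : (∏ p ∈ n.primeFactors, (p:ℕ) ^ (n.factorization p)) = n := by
    simpa [Finsupp.prod, Nat.support_factorization] using Nat.factorization_prod_pow_eq_self hn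
  have hprod : ∏ p ∈ n.primeFactors, ((p:ℝ) ^ (n.factorization p)) ^ ε = (n:ℝ) ^ ε := by
    rw [Real.finset_prod_rpow _ _ (fun p _ => by positivity) ε]
    congr 1
    exact_mod_cast congrArg (fun x : ℕ => (x:ℝ)) hn'
  have step1 : (n.divisors.card : ℝ) ≤
      ∏ p ∈ n.primeFactors, ((if p ≤ B then 1/m else 1) * ((p:ℝ) ^ (n.factorization p)) ^ ε) := by
    rw [hd]
    exact Finset.prod_le_prod (fun p _ => by positivity) key
  rw [Finset.prod_mul_distrib, hprod] at step1
  have hif : (∏ p ∈ n.primeFactors, (if p ≤ B then 1/m else 1)) ≤ (1/m) ^ B := by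
    rw [Finset.prod_ite, Finset.prod_const, Finset.prod_const, one_pow, mul_one]
    have hcard : (n.primeFactors.filter (fun p => p ≤ B)).card ≤ B := by
      have hsub : (n.primeFactors.filter (fun p => p ≤ B)) ⊆ Finset.Icc 1 B := by
        intro p hp
        simp only [Finset.mem_filter] at hp
        exact Finset.mem_Icc.2 ⟨(Nat.prime_of_mem_primeFactors hp.1).one_lt.le, hp.2⟩
      simpa using Finset.card_le_card hsub
    exact pow_le_pow_right₀ hminv hcard
  calc (n.divisors.card : ℝ) ≤ (∏ p ∈ n.primeFactors, (if p ≤ B then 1/m else 1)) * (n:ℝ) ^ ε := step1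
    _ ≤ (1/m) ^ B * (n:ℝ) ^ ε := by
        apply mul_le_mul_of_nonneg_right hif (by positivity)


lemma four_not_dvd_sq_add_one (a : ℤ) : ¬ (4:ℤ) ∣ a^2 + 1 := by
  rintro ⟨s, hs⟩
  rcases Int.even_or_odd a with ⟨t, rfl⟩ | ⟨t, rfl⟩
  · have h : (t+t)^2 + 1 = 4*(t*t) + 1 := by ring
    rw [h] at hs; omega
  · have h : (2*t+1)^2 + 1 = 4*(t*t+t) + 2 := by ring
    rw [h] at hs; omega

lemma sq_eq_negone_cases {p e : ℕ} (hp : p.Prime) (he : 0 < e)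
    (y x0 : ZMod (p^e)) (hy : y^2 = -1) (hx0 : x0^2 = -1) : y = x0 ∨ y = -x0 := by
  haveI : NeZero (p^e) := ⟨pow_ne_zero _ hp.ne_zero⟩
  set a : ℤ := (y.val : ℤ) with ha
  set b : ℤ := (x0.val : ℤ) with hb
  have hay : ((a : ZMod (p^e))) = y := by
    rw [ha]; push_cast; simp [ZMod.natCast_val, ZMod.cast_id]
  have hbx : ((b : ZMod (p^e))) = x0 := by
    rw [hb]; push_cast; simp [ZMod.natCast_val, ZMod.cast_id]
  have hya : ((p:ℤ)^e) ∣ a^2 + 1 := by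
    have h0 : ((a^2 + 1 : ℤ) : ZMod (p^e)) = 0 := by push_cast [hay, hy]; ring
    have h1 := (ZMod.intCast_zmod_eq_zero_iff_dvd _ _).1 h0
    exact_mod_cast h1
  have hxb : ((p:ℤ)^e) ∣ b^2 + 1 := by
    have h0 : ((b^2 + 1 : ℤ) : ZMod (p^e)) = 0 := by push_cast [hbx, hx0]; ring
    have h1 := (ZMod.intCast_zmod_eq_zero_iff_dvd _ _).1 h0
    exact_mod_cast h1
  rcases eq_or_ne p 2 with rfl | hodd
  · rcases eq_or_lt_of_le (show 1 ≤ e from he) with he1 | he2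
    · have hdec : ∀ u v : ZMod (2^1), u^2 = -1 → v^2 = -1 → u = v ∨ u = -v := by decide
      subst he1
      exact hdec y x0 hy hx0
    · exfalso
      have h4 : (4:ℤ) ∣ ((2:ℕ):ℤ)^e := by
        have h5 : ((2:ℕ):ℤ)^2 ∣ ((2:ℕ):ℤ)^e := pow_dvd_pow _ he2
        exact dvd_trans (by norm_num) h5
      exact four_not_dvd_sq_add_one a (h4.trans hya)
  · have hpZ : Prime (p:ℤ) := Nat.prime_iff_prime_int.1 hp
    have hppow : (p:ℤ) ∣ (p:ℤ)^e := dvd_pow_self _ he.ne'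
    have hpa : ¬ (p:ℤ) ∣ a := by
      intro hdvda
      have h1 : (p:ℤ) ∣ 1 := by
        have h2 : (p:ℤ) ∣ a^2 := dvd_pow hdvda two_ne_zero
        exact (dvd_add_right h2).mp (hppow.trans hya)
      have := Int.le_of_dvd one_pos h1
      have h3 : (2:ℤ) ≤ p := by exact_mod_cast hp.two_le
      omega
  -- p^e divides (a-b)(a+b)
    have hdvd : ((p:ℤ)^e) ∣ (a - b) * (a + b) := by
      have h : (a - b) * (a + b) = (a^2 + 1) - (b^2 + 1) := by ring
      rw [h]; exact dvd_sub hya hxb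
    have hcases : ¬ (p:ℤ) ∣ (a-b) ∨ ¬ (p:ℤ) ∣ (a+b) := by
      by_contra hc
      push_neg at hc
      have h2a : (p:ℤ) ∣ 2*a := by
        have := dvd_add hc.1 hc.2
        have heq : (a-b)+(a+b) = 2*a := by ring
        rwa [heq] at this
      rcases hpZ.dvd_mul.mp h2a with h2 | h2
      · have := Int.le_of_dvd (by norm_num) h2
        have h3 : (2:ℤ) ≤ p := by exact_mod_cast hp.two_le
        have h4 : (p:ℤ) ≠ 2 := by exact_mod_cast hodd
        omega
      · exact hpa h2
    have toZMod : ∀ c : ℤ, ((p:ℤ)^e) ∣ c → ((c : ZMod (p^e)) = 0) := by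
      intro c hc
      rw [ZMod.intCast_zmod_eq_zero_iff_dvd]
      exact_mod_cast hc
    rcases hcases with hnd | hnd
    · right
      have hcop : IsCoprime ((p:ℤ)^e) (a-b) := (hpZ.coprime_iff_not_dvd.2 hnd).pow_left
      have hfin : ((p:ℤ)^e) ∣ (a+b) := hcop.dvd_of_dvd_mul_left hdvd
      have h0 := toZMod _ hfin
      push_cast at h0
      rw [hay, hbx] at h0
      linear_combination h0
    · left
      have hcop : IsCoprime ((p:ℤ)^e) (a+b) := (hpZ.coprime_iff_not_dvd.2 hnd).pow_left
      have hfin : ((p:ℤ)^e) ∣ (a-b) := hcop.dvd_of_dvd_mul_right hdvd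
      have h0 := toZMod _ hfin
      push_cast at h0
      rw [hay, hbx] at h0
      linear_combination h0

lemma F_pp {p e : ℕ} (hp : p.Prime) (he : 0 < e) :
    Nat.card {x : ZMod (p^e) // x^2 = -1} ≤ 2 := by
  set S : Set (ZMod (p^e)) := {x | x^2 = -1} with hS
  have h0 : Nat.card {x : ZMod (p^e) // x^2 = -1} = S.ncard := Nat.card_coe_set_eq S
  rcases S.eq_empty_or_nonempty with hemp | ⟨x0, hx0⟩
  · rw [h0, hemp]
    simp
  · have hsub : S ⊆ {x0, -x0} := by
      intro y hy
      rcases sq_eq_negone_cases hp he y x0 hy hx0 with h | h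
      · exact Set.mem_insert_iff.2 (Or.inl h)
      · exact Set.mem_insert_iff.2 (Or.inr (by simpa using h))
    rw [h0]
    calc S.ncard
        ≤ ({x0, -x0} : Set (ZMod (p^e))).ncard :=
          Set.ncard_le_ncard hsub ((Set.finite_singleton _).insert _)
      _ ≤ 2 := by
          refine le_trans (Set.ncard_insert_le _ _) ?_
          simp

lemma F_mul {a b : ℕ} (h : Nat.Coprime a b) :
    Nat.card {x : ZMod (a*b) // x^2 = -1} =
      Nat.card {x : ZMod a // x^2 = -1} * Nat.card {x : ZMod b // x^2 = -1} := by
  let e := ZMod.chineseRemainder h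
  have key : ∀ x : ZMod (a*b), (x^2 = -1) ↔ ((e x).1^2 = -1 ∧ (e x).2^2 = -1) := by
    intro x
    constructor
    · intro hx
      have h1 : (e x)^2 = -1 := by rw [← map_pow, hx, map_neg, map_one]
      constructor
      · have := congrArg Prod.fst h1
        simpa using this
      · have := congrArg Prod.snd h1
        simpa using this
    · intro ⟨h1, h2⟩
      apply e.injective
      rw [map_pow, map_neg, map_one]
      exact Prod.ext (by simpa using h1) (by simpa using h2)
  calc Nat.card {x : ZMod (a*b) // x^2 = -1}
      = Nat.card {y : ZMod a × ZMod b // y.1^2 = -1 ∧ y.2^2 = -1} :=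
        Nat.card_congr (e.toEquiv.subtypeEquiv key)
    _ = _ := by
        rw [Nat.card_congr (Equiv.subtypeProdEquivProd (p := fun u : ZMod a => u^2 = -1) (q := fun u : ZMod b => u^2 = -1)), Nat.card_prod]

lemma F_le_d : ∀ N : ℕ, Nat.card {x : ZMod N // x^2 = -1} ≤ N.divisors.card := by
  intro N
  induction N using Nat.recOnPosPrimePosCoprime with
  | prime_pow p e hp' he =>
    have h2 : Nat.card {x : ZMod (p^e) // x^2 = -1} ≤ 2 := F_pp hp' he
    have hd : (p^e).divisors.card = e + 1 := by
      rw [Nat.divisors_prime_pow hp']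
      simp
    omega
  | zero =>
    have hint : ∀ x : ℤ, x^2 ≠ -1 := fun x hx => by nlinarith [sq_nonneg x]
    haveI : IsEmpty {x : ZMod 0 // x^2 = -1} := ⟨fun ⟨x, hx⟩ => hint x hx⟩
    rw [Nat.card_of_isEmpty]
    simp
  | one =>
    have h1 : Nat.card {x : ZMod 1 // x^2 = -1} ≤ Nat.card (ZMod 1) :=
      Nat.card_le_card_of_injective Subtype.val Subtype.val_injective
    simpa using h1
  | coprime a b ha hb hab iha ihb =>
    rw [F_mul hab, hab.card_divisors_mul]
    exact Nat.mul_le_mul iha ihb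


def repsSet (M : ℕ) : Finset (ℕ × ℕ) :=
  (Finset.Icc 1 M ×ˢ Finset.Icc 1 M).filter fun p => p.1^2 + p.2^2 = M

lemma mem_repsSet {M : ℕ} {p : ℕ × ℕ} (hp : p ∈ repsSet M) :
    1 ≤ p.1 ∧ 1 ≤ p.2 ∧ p.1^2 + p.2^2 = M := by
  simp only [repsSet, Finset.mem_filter, Finset.mem_product, Finset.mem_Icc] at hp
  exact ⟨hp.1.1.1, hp.1.2.1, hp.2⟩

lemma fiber_le (M g : ℕ) (hM : M ≠ 0) :
    (((repsSet M).filter (fun p => Nat.gcd p.1 p.2 = g)).card : ℕ) ≤ M.divisors.card := by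
  set T := (repsSet M).filter (fun p => Nat.gcd p.1 p.2 = g) with hT
  rcases T.eq_empty_or_nonempty with hemp | ⟨w, hw⟩
  · simp [hemp]
  -- extract structural facts about g from the witness
  have hwmem : w ∈ repsSet M ∧ Nat.gcd w.1 w.2 = g := by
    simpa [hT, Finset.mem_filter] using hw
  obtain ⟨hw1, hw2, hwM⟩ := mem_repsSet hwmem.1
  have hg1 : 1 ≤ g := by
    rw [← hwmem.2]
    exact Nat.gcd_pos_of_pos_left _ hw1
  have hg2M : g^2 ∣ M := by
    rw [← hwM]
    exact dvd_add (pow_dvd_pow_of_dvd (hwmem.2 ▸ Nat.gcd_dvd_left _ _) 2)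
      (pow_dvd_pow_of_dvd (hwmem.2 ▸ Nat.gcd_dvd_right _ _) 2)
  set N := M / g^2 with hN
  have hNM : g^2 * N = M := Nat.mul_div_cancel' hg2M
  have hN0 : N ≠ 0 := by
    intro h
    rw [h, mul_zero] at hNM
    exact hM hNM.symm
  haveI : NeZero N := ⟨hN0⟩
  -- facts for each member of the fiber
  have hdata : ∀ p : ℕ × ℕ, p ∈ T →
      g * (p.1 / g) = p.1 ∧ g * (p.2 / g) = p.2 ∧ Nat.Coprime (p.1/g) (p.2/g) ∧
        (p.1/g)^2 + (p.2/g)^2 = N ∧ 1 ≤ p.1/g ∧ 1 ≤ p.2/g := by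
    intro p hp
    have hpm : p ∈ repsSet M ∧ Nat.gcd p.1 p.2 = g := by
      simpa [hT, Finset.mem_filter] using hp
    obtain ⟨h1, h2, hM'⟩ := mem_repsSet hpm.1
    have hgy : g ∣ p.1 := hpm.2 ▸ Nat.gcd_dvd_left _ _
    have hgz : g ∣ p.2 := hpm.2 ▸ Nat.gcd_dvd_right _ _
    have hy := Nat.mul_div_cancel' hgy
    have hz := Nat.mul_div_cancel' hgz
    have hcop : Nat.Coprime (p.1/g) (p.2/g) := by
      rw [← hpm.2]
      exact Nat.coprime_div_gcd_div_gcd (hpm.2 ▸ (by omega : 0 < g))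
    have hsq : (p.1/g)^2 + (p.2/g)^2 = N := by
      have hexp : g^2 * ((p.1/g)^2 + (p.2/g)^2) = g^2 * N := by
        rw [hNM, ← hM', mul_add, ← mul_pow, ← mul_pow, hy, hz]
      exact Nat.eq_of_mul_eq_mul_left (by positivity) hexp
    exact ⟨hy, hz, hcop, hsq, Nat.one_le_div_iff (by omega) |>.2 (Nat.le_of_dvd (by omega) hgy),
      Nat.one_le_div_iff (by omega) |>.2 (Nat.le_of_dvd (by omega) hgz)⟩
  -- the injection into square roots of -1 mod N
  have hcard : T.card ≤ (Finset.univ.filter (fun x : ZMod N => x^2 = -1)).card := by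
    apply Finset.card_le_card_of_injOn
      (fun p => ((p.2 / g : ℕ) : ZMod N) * ((p.1 / g : ℕ) : ZMod N)⁻¹)
    · -- maps to
      intro p hp
      obtain ⟨hy, hz, hcop, hsq, hy1, hz1⟩ := hdata p hp
      set y' := p.1 / g
      set z' := p.2 / g
      have hcopN : Nat.Coprime y' N := by
        have h1 : Nat.Coprime y' (z'^2 + y' * y') := (Nat.coprime_add_mul_left_right y' (z'^2) y').2 (hcop.pow_right 2)
        have h2 : z'^2 + y' * y' = N := by rw [← hsq]; ring
        rwa [h2] at h1
      have hu : IsUnit ((y' : ℕ) : ZMod N) := (ZMod.isUnit_iff_coprime y' N).2 hcopN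
      have hzero : ((y' : ℕ) : ZMod N)^2 + ((z' : ℕ) : ZMod N)^2 = 0 := by
        have : ((y'^2 + z'^2 : ℕ) : ZMod N) = 0 := by rw [hsq]; exact ZMod.natCast_self N
        push_cast at this
        exact this
      simp only [Finset.mem_coe, Finset.mem_filter, Finset.mem_univ, true_and]
      have hu2 : IsUnit (((y' : ℕ) : ZMod N)^2) := hu.pow 2
      apply hu2.mul_left_cancel
      have hinv : ((y' : ℕ) : ZMod N)⁻¹ * ((y' : ℕ) : ZMod N) = 1 := ZMod.inv_mul_of_unit _ hu
      calc ((y' : ℕ) : ZMod N)^2 * (((z' : ℕ) : ZMod N) * ((y' : ℕ) : ZMod N)⁻¹)^2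
          = ((z' : ℕ) : ZMod N)^2 * (((y' : ℕ) : ZMod N)⁻¹ * ((y' : ℕ) : ZMod N))^2 := by ring
        _ = ((z' : ℕ) : ZMod N)^2 := by rw [hinv]; ring
        _ = -(((y' : ℕ) : ZMod N)^2) := by linear_combination hzero
        _ = ((y' : ℕ) : ZMod N)^2 * (-1) := by ring
    · -- injective on T
      intro p hp q hq heq
      obtain ⟨hpy, hpz, hpcop, hpsq, hpy1, hpz1⟩ := hdata p hp
      obtain ⟨hqy, hqz, hqcop, hqsq, hqy1, hqz1⟩ := hdata q hq
      set y1 := p.1 / g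
      set z1 := p.2 / g
      set y2 := q.1 / g
      set z2 := q.2 / g
      have hu1 : IsUnit ((y1 : ℕ) : ZMod N) := by
        apply (ZMod.isUnit_iff_coprime y1 N).2
        have h1 : Nat.Coprime y1 (z1^2 + y1 * y1) := (Nat.coprime_add_mul_left_right y1 (z1^2) y1).2 (hpcop.pow_right 2)
        have h2 : z1^2 + y1 * y1 = N := by rw [← hpsq]; ring
        rwa [h2] at h1
      have hu2 : IsUnit ((y2 : ℕ) : ZMod N) := by
        apply (ZMod.isUnit_iff_coprime y2 N).2
        have h1 : Nat.Coprime y2 (z2^2 + y2 * y2) := (Nat.coprime_add_mul_left_right y2 (z2^2) y2).2 (hqcop.pow_right 2)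
        have h2 : z2^2 + y2 * y2 = N := by rw [← hqsq]; ring
        rwa [h2] at h1
      have hinv1 : ((y1 : ℕ) : ZMod N)⁻¹ * ((y1 : ℕ) : ZMod N) = 1 := ZMod.inv_mul_of_unit _ hu1
      have hinv2 : ((y2 : ℕ) : ZMod N)⁻¹ * ((y2 : ℕ) : ZMod N) = 1 := ZMod.inv_mul_of_unit _ hu2
      have heq' : ((p.2/g : ℕ) : ZMod N) * ((p.1/g : ℕ) : ZMod N)⁻¹
          = ((q.2/g : ℕ) : ZMod N) * ((q.1/g : ℕ) : ZMod N)⁻¹ := heq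
      have hcross : ((z1 * y2 : ℕ) : ZMod N) = ((z2 * y1 : ℕ) : ZMod N) := by
        push_cast
        have e1 : ((z1:ℕ) : ZMod N) * ((y2:ℕ) : ZMod N)
            = (((z1:ℕ) : ZMod N) * ((y1:ℕ) : ZMod N)⁻¹) * (((y1:ℕ) : ZMod N) * ((y2:ℕ) : ZMod N)) := by
          rw [show (((z1:ℕ) : ZMod N) * ((y1:ℕ) : ZMod N)⁻¹) * (((y1:ℕ) : ZMod N) * ((y2:ℕ) : ZMod N))
              = ((z1:ℕ) : ZMod N) * ((y2:ℕ) : ZMod N) * (((y1:ℕ) : ZMod N)⁻¹ * ((y1:ℕ) : ZMod N)) by ring,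
            hinv1, mul_one]
        have e2 : ((z2:ℕ) : ZMod N) * ((y1:ℕ) : ZMod N)
            = (((z2:ℕ) : ZMod N) * ((y2:ℕ) : ZMod N)⁻¹) * (((y1:ℕ) : ZMod N) * ((y2:ℕ) : ZMod N)) := by
          rw [show (((z2:ℕ) : ZMod N) * ((y2:ℕ) : ZMod N)⁻¹) * (((y1:ℕ) : ZMod N) * ((y2:ℕ) : ZMod N))
              = ((z2:ℕ) : ZMod N) * ((y1:ℕ) : ZMod N) * (((y2:ℕ) : ZMod N)⁻¹ * ((y2:ℕ) : ZMod N)) by ring,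
            hinv2, mul_one]
        rw [e1, e2, heq']
      have hy1sq : 1 ≤ y1^2 := Nat.one_le_pow _ _ (by omega)
      have hy2sq : 1 ≤ y2^2 := Nat.one_le_pow _ _ (by omega)
      have hz1sq : 1 ≤ z1^2 := Nat.one_le_pow _ _ (by omega)
      have hz2sq : 1 ≤ z2^2 := Nat.one_le_pow _ _ (by omega)
      have hz1N : z1^2 < N := by linarith
      have hz2N : z2^2 < N := by linarith
      have hy1N : y1^2 < N := by linarith
      have hy2N : y2^2 < N := by linarith
      have hlt1 : z1 * y2 < N := by
        have h3 : (z1*y2)^2 < N^2 := by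
          calc (z1*y2)^2 = z1^2 * y2^2 := by ring
            _ < N * N := Nat.mul_lt_mul'' hz1N hy2N
            _ = N^2 := (sq N).symm
        exact lt_of_pow_lt_pow_left₀ 2 (Nat.zero_le N) h3
      have hlt2 : z2 * y1 < N := by
        have h3 : (z2*y1)^2 < N^2 := by
          calc (z2*y1)^2 = z2^2 * y1^2 := by ring
            _ < N * N := Nat.mul_lt_mul'' hz2N hy1N
            _ = N^2 := (sq N).symm
        exact lt_of_pow_lt_pow_left₀ 2 (Nat.zero_le N) h3
      have hnat : z1 * y2 = z2 * y1 := by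
        have := congrArg ZMod.val hcross
        rwa [ZMod.val_cast_of_lt hlt1, ZMod.val_cast_of_lt hlt2] at this
      have hy12 : y1 = y2 := by
        apply Nat.dvd_antisymm
        · exact hpcop.dvd_of_dvd_mul_left (by rw [hnat]; exact dvd_mul_left y1 z2)
        · exact hqcop.dvd_of_dvd_mul_left (by rw [← hnat]; exact dvd_mul_left y2 z1)
      have hz12 : z1 = z2 := by
        have : z1 * y2 = z2 * y2 := by rw [hnat, hy12]
        exact Nat.eq_of_mul_eq_mul_right (by omega) this
      have hp1 : p.1 = q.1 := by rw [← hpy, ← hqy, hy12]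
      have hp2 : p.2 = q.2 := by rw [← hpz, ← hqz, hz12]
      exact Prod.ext hp1 hp2
  -- conclude
  have heqcard : (Finset.univ.filter (fun x : ZMod N => x^2 = -1)).card
      = Nat.card {x : ZMod N // x^2 = -1} := by
    rw [Nat.card_eq_fintype_card, Fintype.card_subtype]
  have hdiv : N.divisors.card ≤ M.divisors.card :=
    Finset.card_le_card (Nat.divisors_subset_of_dvd hM (Nat.div_dvd_of_dvd hg2M))
  calc T.card ≤ _ := hcard
    _ = Nat.card {x : ZMod N // x^2 = -1} := heqcard
    _ ≤ N.divisors.card := F_le_d N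
    _ ≤ M.divisors.card := hdiv

lemma reps_card_le (M : ℕ) (hM : M ≠ 0) : (repsSet M).card ≤ M.divisors.card ^ 2 := by
  rw [Finset.card_eq_sum_card_image (fun p : ℕ × ℕ => Nat.gcd p.1 p.2) (repsSet M)]
  have himg : ((repsSet M).image fun p => Nat.gcd p.1 p.2) ⊆ M.divisors := by
    intro g hg
    obtain ⟨p, hp, rfl⟩ := Finset.mem_image.1 hg
    obtain ⟨h1, h2, h3⟩ := mem_repsSet hp
    refine Nat.mem_divisors.2 ⟨?_, hM⟩
    have hgy : Nat.gcd p.1 p.2 ∣ p.1 := Nat.gcd_dvd_left _ _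
    have hgz : Nat.gcd p.1 p.2 ∣ p.2 := Nat.gcd_dvd_right _ _
    calc Nat.gcd p.1 p.2 ∣ (Nat.gcd p.1 p.2)^2 := dvd_pow_self _ two_ne_zero
      _ ∣ p.1^2 + p.2^2 := dvd_add (pow_dvd_pow_of_dvd hgy 2) (pow_dvd_pow_of_dvd hgz 2)
      _ = M := h3
  calc ∑ g ∈ (repsSet M).image (fun p => Nat.gcd p.1 p.2),
        ((repsSet M).filter (fun p => Nat.gcd p.1 p.2 = g)).card
      ≤ ∑ _g ∈ (repsSet M).image (fun p => Nat.gcd p.1 p.2), M.divisors.card :=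
        Finset.sum_le_sum (fun g _ => fiber_le M g hM)
    _ = ((repsSet M).image (fun p => Nat.gcd p.1 p.2)).card * M.divisors.card := by
        rw [Finset.sum_const, smul_eq_mul]
    _ ≤ M.divisors.card * M.divisors.card :=
        Nat.mul_le_mul_right _ (Finset.card_le_card himg)
    _ = M.divisors.card ^ 2 := (sq _).symm

lemma reps_bound : ∀ ε : ℝ, 0 < ε → ∃ C : ℝ, 0 < C ∧ ∀ M : ℕ, M ≠ 0 →
    ((repsSet M).card : ℝ) ≤ C * (M : ℝ) ^ ε := by
  intro ε hε
  obtain ⟨C, hC1, hC⟩ := divisor_bound (ε/2) (by positivity)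
  refine ⟨C^2, by positivity, fun M hM => ?_⟩
  have h1 : ((repsSet M).card : ℝ) ≤ ((M.divisors.card : ℝ))^2 := by
    exact_mod_cast reps_card_le M hM
  have h2 : ((M.divisors.card : ℝ))^2 ≤ (C * (M:ℝ)^(ε/2))^2 :=
    pow_le_pow_left₀ (Nat.cast_nonneg _) (hC M hM) 2
  have h3 : (C * (M:ℝ)^(ε/2))^2 = C^2 * (M:ℝ)^ε := by
    rw [mul_pow, ← Real.rpow_natCast ((M:ℝ)^(ε/2)) 2, ← Real.rpow_mul (Nat.cast_nonneg _)]
    congr 1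
    push_cast
    ring
  linarith

end AuxDB

set_option maxHeartbeats 1000000 in
/-- Lemma 3.1, bound for `D(H,q,k)`: `D(H,q,k) ≪ q⁻¹ H^{3+ε}` for `q ≪ H²`. -/
theorem Dcount_bound (k : ℤ) :
    ∀ ε : ℝ, 0 < ε → ∃ C : ℝ, 0 < C ∧ ∀ H q : ℕ, 2 ≤ H → 0 < q →
      (q : ℤ) ≤ 3 * (H : ℤ) ^ 2 + |k| →
        (Dcount H q k : ℝ) ≤ C * (q : ℝ)⁻¹ * (H : ℝ) ^ ((3 : ℝ) + ε) := by
  intro ε hε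
  obtain ⟨C0, hC00, hC0⟩ := reps_bound (ε/2) (by positivity)
  refine ⟨(9 + 2*|(k:ℝ)|) * (C0 * (2:ℝ)^(ε/2)), by positivity, ?_⟩
  intro H q hH hq hqle
  classical
  set S := ((Finset.Icc 1 H ×ˢ Finset.Icc 1 H ×ˢ Finset.Icc 1 H).filter
    (fun t => (q : ℤ) ∣ ((t.1 : ℤ) ^ 2 + (t.2.1 : ℤ) ^ 2 + (t.2.2 : ℤ) ^ 2 + k))) with hS
  set f : ℕ × ℕ × ℕ → ℤ := fun t => (t.1 : ℤ) ^ 2 + (t.2.1 : ℤ) ^ 2 + (t.2.2 : ℤ) ^ 2 + k with hf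
  have hHR : (2:ℝ) ≤ H := by exact_mod_cast hH
  have hH0 : (0:ℝ) < H := by linarith
  have hq0R : (0:ℝ) < q := by exact_mod_cast hq
  -- membership facts
  have hmemS : ∀ t ∈ S, (1 ≤ t.1 ∧ t.1 ≤ H) ∧ (1 ≤ t.2.1 ∧ t.2.1 ≤ H) ∧ (1 ≤ t.2.2 ∧ t.2.2 ≤ H)
      ∧ (q:ℤ) ∣ f t := by
    intro t ht
    rw [hS, Finset.mem_filter, Finset.mem_product, Finset.mem_product] at ht
    simp only [Finset.mem_Icc] at ht
    exact ⟨ht.1.1, ht.1.2.1, ht.1.2.2, ht.2⟩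
  set B1 : ℝ := C0 * ((2:ℝ)*(H:ℝ)^2)^(ε/2) with hB1
  have hB1pos : 0 < B1 := by positivity
  -- inner fiber bound
  have fiberB : ∀ a ∈ S.image f, ((S.filter (fun t => f t = a)).card : ℝ) ≤ (H:ℝ) * B1 := by
    intro a _
    set Sa := S.filter (fun t => f t = a) with hSa
    have hcardeq := Finset.card_eq_sum_card_image (fun t : ℕ × ℕ × ℕ => t.1) Sa
    have inner : ∀ x ∈ Sa.image (fun t : ℕ × ℕ × ℕ => t.1),
        ((Sa.filter (fun t => t.1 = x)).card : ℝ) ≤ B1 := by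
      intro x _
      set Fx := Sa.filter (fun t => t.1 = x) with hFx
      rcases Fx.eq_empty_or_nonempty with hemp | ⟨w, hw⟩
      · rw [hemp]
        simp only [Finset.card_empty, Nat.cast_zero]
        positivity
      · have hwdata : w ∈ S ∧ f w = a ∧ w.1 = x := by
          rw [hFx, Finset.mem_filter, hSa, Finset.mem_filter] at hw
          exact ⟨hw.1.1, hw.1.2, hw.2⟩
        obtain ⟨hwS, hwa, hwx⟩ := hwdata
        obtain ⟨⟨hw11, hw12⟩, ⟨hw21, hw22⟩, ⟨hw31, hw32⟩, -⟩ := hmemS w hwS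
        set M : ℕ := w.2.1^2 + w.2.2^2 with hM
        have hM0 : M ≠ 0 := by
          have : 1 ≤ w.2.1^2 := Nat.one_le_pow _ _ (by omega)
          omega
        have hMle : (M:ℝ) ≤ 2*(H:ℝ)^2 := by
          have h1 : w.2.1^2 ≤ H^2 := Nat.pow_le_pow_left hw22 2
          have h2 : w.2.2^2 ≤ H^2 := Nat.pow_le_pow_left hw32 2
          have : M ≤ 2*H^2 := by omega
          exact_mod_cast this
        have hcard : Fx.card ≤ (repsSet M).card := by
          apply Finset.card_le_card_of_injOn (fun t => (t.2.1, t.2.2))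
          · intro t ht
            have htdata : t ∈ S ∧ f t = a ∧ t.1 = x := by
              rw [hFx, Finset.mem_coe, Finset.mem_filter, hSa, Finset.mem_filter] at ht
              exact ⟨ht.1.1, ht.1.2, ht.2⟩
            obtain ⟨htS, hta, htx⟩ := htdata
            obtain ⟨⟨ht11, ht12⟩, ⟨ht21, ht22⟩, ⟨ht31, ht32⟩, -⟩ := hmemS t htS
            have hsum : (t.2.1:ℤ)^2 + (t.2.2:ℤ)^2 = (w.2.1:ℤ)^2 + (w.2.2:ℤ)^2 := by
              have h1 : f t = f w := by rw [hta, hwa]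
              rw [hf] at h1
              simp only at h1
              rw [htx, hwx] at h1
              linarith [h1]
            have hsumN : t.2.1^2 + t.2.2^2 = M := by
              rw [hM]
              exact_mod_cast hsum
            have hle1 : t.2.1 ≤ M := le_trans (Nat.le_self_pow two_ne_zero _) (by omega)
            have hle2 : t.2.2 ≤ M := le_trans (Nat.le_self_pow two_ne_zero _) (by omega)
            rw [repsSet, Finset.mem_coe, Finset.mem_filter, Finset.mem_product]
            exact ⟨⟨Finset.mem_Icc.2 ⟨ht21, hle1⟩, Finset.mem_Icc.2 ⟨ht31, hle2⟩⟩, hsumN⟩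
          · intro t ht t' ht' hpair
            have htx : t.1 = x := (Finset.mem_filter.1 ht).2
            have htx' : t'.1 = x := (Finset.mem_filter.1 ht').2
            have h1 : t.2 = t'.2 := Prod.ext (congrArg Prod.fst hpair) (congrArg Prod.snd hpair)
            exact Prod.ext (htx.trans htx'.symm) h1
        calc ((Sa.filter (fun t => t.1 = x)).card : ℝ) ≤ ((repsSet M).card : ℝ) := by
              exact_mod_cast hcard
          _ ≤ C0 * (M:ℝ)^(ε/2) := hC0 M hM0
          _ ≤ B1 := by
              rw [hB1]
              exact mul_le_mul_of_nonneg_left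
                (Real.rpow_le_rpow (Nat.cast_nonneg M) hMle (by positivity)) hC00.le
    have himgH : ((Sa.image (fun t : ℕ × ℕ × ℕ => t.1)).card : ℝ) ≤ (H:ℝ) := by
      have hsub : Sa.image (fun t : ℕ × ℕ × ℕ => t.1) ⊆ Finset.Icc 1 H := by
        intro x hx
        obtain ⟨t, ht, rfl⟩ := Finset.mem_image.1 hx
        have htS : t ∈ S := (Finset.mem_filter.1 ht).1
        obtain ⟨⟨h1, h2⟩, -, -, -⟩ := hmemS t htS
        exact Finset.mem_Icc.2 ⟨h1, h2⟩
      have := Finset.card_le_card hsub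
      rw [Nat.card_Icc] at this
      have : (Sa.image (fun t : ℕ × ℕ × ℕ => t.1)).card ≤ H := by omega
      exact_mod_cast this
    calc ((Sa.card : ℕ) : ℝ)
        = ∑ x ∈ Sa.image (fun t : ℕ × ℕ × ℕ => t.1),
            (((Sa.filter (fun t => t.1 = x)).card : ℕ) : ℝ) := by
          rw [hcardeq]
          push_cast
          rfl
      _ ≤ ∑ _x ∈ Sa.image (fun t : ℕ × ℕ × ℕ => t.1), B1 := Finset.sum_le_sum inner
      _ = ((Sa.image (fun t : ℕ × ℕ × ℕ => t.1)).card : ℝ) * B1 := by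
          rw [Finset.sum_const, nsmul_eq_mul]
      _ ≤ (H:ℝ) * B1 := mul_le_mul_of_nonneg_right himgH hB1pos.le
  -- image count bound
  have imgB : ((S.image f).card : ℝ) ≤ (9 + 2*|(k:ℝ)|) * (H:ℝ)^2 / q := by
    have hq0 : (0:ℤ) < q := by exact_mod_cast hq
    set lo : ℤ := (k+3)/q with hlo
    set hi : ℤ := (3*(H:ℤ)^2+k)/q with hhi
    have hmem : ∀ a ∈ S.image f, (q:ℤ) ∣ a ∧ k+3 ≤ a ∧ a ≤ 3*(H:ℤ)^2+k := by
      intro a ha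
      obtain ⟨t, ht, rfl⟩ := Finset.mem_image.1 ha
      obtain ⟨⟨h11, h12⟩, ⟨h21, h22⟩, ⟨h31, h32⟩, hdvd⟩ := hmemS t ht
      refine ⟨hdvd, ?_, ?_⟩
      · have e1 : (1:ℤ) ≤ (t.1:ℤ) := by exact_mod_cast h11
        have e2 : (1:ℤ) ≤ (t.2.1:ℤ) := by exact_mod_cast h21
        have e3 : (1:ℤ) ≤ (t.2.2:ℤ) := by exact_mod_cast h31
        rw [hf]
        simp only
        nlinarith
      · have e1 : (t.1:ℤ) ≤ (H:ℤ) := by exact_mod_cast h12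
        have e2 : (t.2.1:ℤ) ≤ (H:ℤ) := by exact_mod_cast h22
        have e3 : (t.2.2:ℤ) ≤ (H:ℤ) := by exact_mod_cast h32
        have e4 : (0:ℤ) ≤ t.1 := Int.natCast_nonneg _
        have e5 : (0:ℤ) ≤ t.2.1 := Int.natCast_nonneg _
        have e6 : (0:ℤ) ≤ t.2.2 := Int.natCast_nonneg _
        rw [hf]
        simp only
        nlinarith
    have hcard : (S.image f).card ≤ (Finset.Icc lo hi).card := by
      apply Finset.card_le_card_of_injOn (fun a : ℤ => a / (q:ℤ))
      · intro a ha
        obtain ⟨hdvd, h1, h2⟩ := hmem a ha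
        exact Finset.mem_Icc.2 ⟨Int.ediv_le_ediv hq0 h1, Int.ediv_le_ediv hq0 h2⟩
      · intro a ha b hb hab
        obtain ⟨hdvda, -, -⟩ := hmem a ha
        obtain ⟨hdvdb, -, -⟩ := hmem b hb
        have h1 : (q:ℤ) * (a/q) = a := Int.mul_ediv_cancel' hdvda
        have h2 : (q:ℤ) * (b/q) = b := Int.mul_ediv_cancel' hdvdb
        simp only at hab
        rw [← h1, ← h2, hab]
    have hHZ : (2:ℤ) ≤ (H:ℤ) := by exact_mod_cast hH
    have hlohi : lo ≤ hi := Int.ediv_le_ediv hq0 (by nlinarith)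
    have hIcc : ((Finset.Icc lo hi).card : ℝ) = (hi:ℝ) - lo + 1 := by
      have h1 : ((Finset.Icc lo hi).card : ℤ) = hi + 1 - lo := by
        rw [Int.card_Icc]
        omega
      have h2 : (((Finset.Icc lo hi).card : ℤ) : ℝ) = ((hi + 1 - lo : ℤ) : ℝ) := by rw [h1]
      push_cast at h2
      linarith
    have hdivle : ∀ b : ℤ, (q:ℤ) * (b / q) ≤ b ∧ b < (q:ℤ) * (b / q) + q := by
      intro b
      have e := Int.mul_ediv_add_emod b (q:ℤ)
      have e1 : 0 ≤ b % (q:ℤ) := Int.emod_nonneg b (by exact_mod_cast hq.ne')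
      have e2 : b % (q:ℤ) < q := Int.emod_lt_of_pos b hq0
      constructor <;> linarith
    have hiR : (q:ℝ) * (hi:ℝ) ≤ 3*(H:ℝ)^2 + (k:ℝ) := by
      have := (hdivle (3*(H:ℤ)^2+k)).1
      rw [hhi]
      exact_mod_cast this
    have loR : (k:ℝ) + 3 < (q:ℝ)*(lo:ℝ) + q := by
      have := (hdivle (k+3)).2
      rw [hlo]
      exact_mod_cast this
    calc ((S.image f).card : ℝ) ≤ ((Finset.Icc lo hi).card : ℝ) := by exact_mod_cast hcard
      _ = (hi:ℝ) - lo + 1 := hIcc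
      _ ≤ (9 + 2*|(k:ℝ)|) * (H:ℝ)^2 / q := by
          rw [le_div_iff₀ hq0R]
          have habs1 : (k:ℝ) ≤ |(k:ℝ)| := le_abs_self _
          have habs2 : -(k:ℝ) ≤ |(k:ℝ)| := neg_le_abs _
          have habs0 : (0:ℝ) ≤ |(k:ℝ)| := abs_nonneg _
          have hqleR : (q:ℝ) ≤ 3*(H:ℝ)^2 + |(k:ℝ)| := by exact_mod_cast hqle
          have hH2 : (1:ℝ) ≤ (H:ℝ)^2 := by nlinarith
          have hk2 : |(k:ℝ)| * 1 ≤ |(k:ℝ)| * (H:ℝ)^2 := mul_le_mul_of_nonneg_left hH2 habs0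
          have hexp : ((hi:ℝ) - lo + 1) * q = q*hi - q*lo + q := by ring
          nlinarith [hiR, loR]
  -- final assembly
  have main : (Dcount H q k : ℝ) ≤ ((9 + 2*|(k:ℝ)|) * (H:ℝ)^2 / q) * ((H:ℝ) * B1) := by
    have h0 : Dcount H q k = S.card := rfl
    rw [h0, Finset.card_eq_sum_card_image f S]
    push_cast
    calc ∑ a ∈ S.image f, ((S.filter (fun t => f t = a)).card : ℝ)
        ≤ ∑ _a ∈ S.image f, (H:ℝ) * B1 := Finset.sum_le_sum fiberB
      _ = ((S.image f).card : ℝ) * ((H:ℝ)*B1) := by rw [Finset.sum_const, nsmul_eq_mul]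
      _ ≤ _ := mul_le_mul_of_nonneg_right imgB (by positivity)
  have hHpow : (H:ℝ)^2 * (H:ℝ) * ((H:ℝ)^2)^(ε/2) = (H:ℝ)^((3:ℝ)+ε) := by
    rw [Real.rpow_add hH0]
    have h1 : ((H:ℝ)^2)^(ε/2) = (H:ℝ)^ε := by
      rw [← Real.rpow_natCast (H:ℝ) 2, ← Real.rpow_mul hH0.le]
      norm_num
      congr 1
      ring
    have h2 : (H:ℝ)^((3:ℝ)) = (H:ℝ)^(3:ℕ) := by
      rw [← Real.rpow_natCast (H:ℝ) 3]
      norm_num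
    rw [h1, h2]
    ring
  calc (Dcount H q k : ℝ) ≤ ((9 + 2*|(k:ℝ)|) * (H:ℝ)^2 / q) * ((H:ℝ) * B1) := main
    _ = (9 + 2*|(k:ℝ)|) * (C0 * (2:ℝ)^(ε/2)) * (q:ℝ)⁻¹ *
          ((H:ℝ)^2 * (H:ℝ) * ((H:ℝ)^2)^(ε/2)) := by
        rw [hB1, Real.mul_rpow (by norm_num) (by positivity)]
        field_simp
    _ = (9 + 2*|(k:ℝ)|) * (C0 * (2:ℝ)^(ε/2)) * ((q:ℝ)⁻¹ * (H:ℝ)^((3:ℝ)+ε)) := by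
        rw [hHpow]
        ring
    _ = (9 + 2*|(k:ℝ)|) * (C0 * (2:ℝ)^(ε/2)) * (q:ℝ)⁻¹ * (H:ℝ)^((3:ℝ)+ε) := by
        ring
end
end
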